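/- Let τ > 0, M ≥ 0, and c ∈ ℝ. There exists a constant C ≥ 0 (depending only on τ, M, c) with the following property: for all continuous functions K₁, K₂ : ℝ → ℝ satisfying |K_i(t)| ≤ M for every t ∈ [0, τ] (i = 1, 2), and all functions j₁, j₂, j₁', j₂' : ℝ → ℝ such that for every t ∈ [0, τ] and i = 1, 2, j_i has derivative j_i'(t) at t and j_i' has derivative −K_i(t)·j_i(t) at t, with initial conditions j₁(0) = j₂(0) = 0 and j₁'(0) = j₂'(0) = c, one has sup_{t ∈ [0,τ]} | j₁(t) − j₂(t) | ≤ C · sup_{t ∈ [0,τ]} | K₁(t) − K₂(t) |. -/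

import Mathlib

open Set Real

/-- Lipschitz continuous dependence of Jacobi fields on the curvature
coefficient: there is a constant `C = C(τ, M, c)` such that any two solutions
of `j'' + K_i j = 0` on `[0, τ]` with the same initial conditions
`j(0) = 0`, `j'(0) = c`, and curvature profiles bounded by `M`, satisfy
`sup_{[0,τ]} |j₁ - j₂| ≤ C · sup_{[0,τ]} |K₁ - K₂|`. -/
theorem jacobi_continuous_dependence_on_curvature
    (τ M : ℝ) (hτ : 0 < τ) (hM : 0 ≤ M) (c : ℝ) :
    ∃ C : ℝ, 0 ≤ C ∧
      ∀ K₁ K₂ : ℝ → ℝ, Continuous K₁ → Continuous K₂ →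
      (∀ t ∈ Set.Icc (0 : ℝ) τ, |K₁ t| ≤ M) →
      (∀ t ∈ Set.Icc (0 : ℝ) τ, |K₂ t| ≤ M) →
      ∀ j₁ j₂ j₁' j₂' : ℝ → ℝ,
      (∀ t ∈ Set.Icc (0 : ℝ) τ,
        HasDerivAt j₁ (j₁' t) t ∧ HasDerivAt j₁' (-(K₁ t) * j₁ t) t) →
      (∀ t ∈ Set.Icc (0 : ℝ) τ,
        HasDerivAt j₂ (j₂' t) t ∧ HasDerivAt j₂' (-(K₂ t) * j₂ t) t) →
      j₁ 0 = 0 → j₂ 0 = 0 → j₁' 0 = c → j₂' 0 = c →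
      ∀ t ∈ Set.Icc (0 : ℝ) τ,
        |j₁ t - j₂ t| ≤
          C * sSup ((fun s => |K₁ s - K₂ s|) '' Set.Icc (0 : ℝ) τ) := by
  set L : ℝ := M + 1 with hLdef
  have hL : (0:ℝ) < L := by linarith
  have hexp1 : (1:ℝ) ≤ exp (L * τ) := by
    rw [← exp_zero]
    exact exp_le_exp.mpr (by positivity)
  set B : ℝ := |c| * exp (L * τ) with hBdef
  have hB : 0 ≤ B := by positivity
  refine ⟨B * (exp (L * τ) - 1) / L, div_nonneg (mul_nonneg hB (by linarith)) hL.le, ?_⟩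
  intro K₁ K₂ hK₁c hK₂c hK₁b hK₂b j₁ j₂ j₁' j₂' h₁ h₂ hj₁0 hj₂0 hj₁'0 hj₂'0 t ht
  set S : ℝ := sSup ((fun s => |K₁ s - K₂ s|) '' Set.Icc (0 : ℝ) τ) with hSdef
  have hbdd : BddAbove ((fun s => |K₁ s - K₂ s|) '' Set.Icc (0 : ℝ) τ) :=
    (isCompact_Icc.image_of_continuousOn
      (((hK₁c.sub hK₂c).abs).continuousOn)).bddAbove
  have hSle : ∀ s ∈ Set.Icc (0:ℝ) τ, |K₁ s - K₂ s| ≤ S := fun s hs =>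
    le_csSup hbdd ⟨s, hs, rfl⟩
  have hS0 : 0 ≤ S := le_trans (abs_nonneg _) (hSle 0 ⟨le_refl _, hτ.le⟩)
  -- step 1: bound on j₂
  have hg : ∀ s ∈ Set.Icc (0:ℝ) τ, ‖(j₂ s, j₂' s)‖ ≤ B := by
    intro s hs
    have key := norm_le_gronwallBound_of_norm_deriv_right_le
      (f := fun u => (j₂ u, j₂' u)) (f' := fun u => (j₂' u, -(K₂ u) * j₂ u))
      (δ := |c|) (K := L) (ε := 0) (a := 0) (b := τ)
      (fun u hu => (((h₂ u hu).1.prodMk (h₂ u hu).2).continuousAt).continuousWithinAt)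
      (fun u hu => (((h₂ u (Ico_subset_Icc_self hu)).1.prodMk
        (h₂ u (Ico_subset_Icc_self hu)).2).hasDerivWithinAt))
      (by simp [Prod.norm_def, hj₂0, hj₂'0])
      ?_ s hs
    · rw [sub_zero, gronwallBound_ε0] at key
      refine key.trans ?_
      have : exp (L * s) ≤ exp (L * τ) :=
        exp_le_exp.mpr (mul_le_mul_of_nonneg_left hs.2 hL.le)
      exact mul_le_mul_of_nonneg_left this (abs_nonneg c)
    · intro u hu
      have hu' := Ico_subset_Icc_self hu
      rw [Prod.norm_def]
      have h1 : ‖j₂' u‖ ≤ max ‖j₂ u‖ ‖j₂' u‖ := le_max_right _ _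
      have h2 : ‖-(K₂ u) * j₂ u‖ ≤ M * max ‖j₂ u‖ ‖j₂' u‖ := by
        rw [norm_mul, norm_neg]
        exact mul_le_mul (hK₂b u hu') (le_max_left _ _) (norm_nonneg _) hM
      have hm : (0:ℝ) ≤ max ‖j₂ u‖ ‖j₂' u‖ := le_trans (norm_nonneg _) (le_max_left _ _)
      rw [Prod.norm_def]
      simp only [add_zero]
      apply max_le
      · nlinarith
      · nlinarith
  -- step 2: Gronwall for the difference
  set f : ℝ → ℝ × ℝ := fun u => (j₁ u - j₂ u, j₁' u - j₂' u) with hfdef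
  set f' : ℝ → ℝ × ℝ := fun u =>
    (j₁' u - j₂' u, -(K₁ u) * (j₁ u - j₂ u) - (K₁ u - K₂ u) * j₂ u) with hf'def
  have hfd : ∀ u ∈ Set.Icc (0:ℝ) τ, HasDerivAt f (f' u) u := by
    intro u hu
    have hd2 : HasDerivAt (fun x => j₁' x - j₂' x)
        (-(K₁ u) * (j₁ u - j₂ u) - (K₁ u - K₂ u) * j₂ u) u := by
      have : HasDerivAt (fun x => j₁' x - j₂' x) _ u := (h₁ u hu).2.sub (h₂ u hu).2
      convert this using 1
      ring
    exact ((h₁ u hu).1.sub (h₂ u hu).1).prodMk hd2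
  have key := norm_le_gronwallBound_of_norm_deriv_right_le
      (f := f) (f' := f') (δ := 0) (K := L) (ε := S * B) (a := 0) (b := τ)
      (fun u hu => ((hfd u hu).continuousAt).continuousWithinAt)
      (fun u hu => (hfd u (Ico_subset_Icc_self hu)).hasDerivWithinAt)
      (by simp [hfdef, Prod.norm_def, hj₁0, hj₂0, hj₁'0, hj₂'0])
      ?_ t ht
  · rw [sub_zero, gronwallBound_of_K_ne_0 hL.ne'] at key
    simp only [zero_mul] at key
    have hft : |j₁ t - j₂ t| ≤ ‖f t‖ := by
      rw [Prod.norm_def]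
      exact le_max_left _ _
    have hmono : exp (L * t) - 1 ≤ exp (L * τ) - 1 := by
      have : exp (L * t) ≤ exp (L * τ) :=
        exp_le_exp.mpr (mul_le_mul_of_nonneg_left ht.2 hL.le)
      linarith
    calc |j₁ t - j₂ t| ≤ ‖f t‖ := hft
      _ ≤ 0 + S * B / L * (exp (L * t) - 1) := key
      _ ≤ S * B / L * (exp (L * τ) - 1) := by
          rw [zero_add]
          apply mul_le_mul_of_nonneg_left hmono
          positivity
      _ = B * (exp (L * τ) - 1) / L * S := by ring
  · intro u hu
    have hu' := Ico_subset_Icc_self hu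
    rw [Prod.norm_def, Prod.norm_def]
    have hgB := hg u hu'
    rw [Prod.norm_def] at hgB
    have hj₂B : ‖j₂ u‖ ≤ B := le_trans (le_max_left _ _) hgB
    have h2 : ‖-(K₁ u) * (j₁ u - j₂ u) - (K₁ u - K₂ u) * j₂ u‖ ≤
        M * ‖j₁ u - j₂ u‖ + S * B := by
      refine (norm_sub_le _ _).trans ?_
      gcongr
      · rw [norm_mul, norm_neg]
        exact mul_le_mul_of_nonneg_right (hK₁b u hu') (norm_nonneg _)
      · rw [norm_mul]
        exact mul_le_mul (hSle u hu') hj₂B (norm_nonneg _) hS0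
    have hm : (0:ℝ) ≤ max ‖j₁ u - j₂ u‖ ‖j₁' u - j₂' u‖ :=
      le_trans (norm_nonneg _) (le_max_left _ _)
    have h1a : ‖j₁ u - j₂ u‖ ≤ max ‖j₁ u - j₂ u‖ ‖j₁' u - j₂' u‖ := le_max_left _ _
    have h1b : ‖j₁' u - j₂' u‖ ≤ max ‖j₁ u - j₂ u‖ ‖j₁' u - j₂' u‖ := le_max_right _ _
    apply max_le
    · nlinarith [mul_nonneg hS0 hB]
    · nlinarith [mul_nonneg hS0 hB]
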